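/- (Theorem 2.1, third identity, q-case.) Let n ∈ ℕ, α₁, α₂ ∈ (0,1) and let m₂ be a natural number with m₂ ≤ n. Then the m₂-th q-factorial moment of the second coordinate of the q-trinomial distribution of the first kind satisfies ∑_{y₁=0}^{n} ∑_{y₂=0}^{n−y₁} [y₂]_{m₂,q} · f(y₁,y₂) = [n]_{m₂,q} · α₂^{m₂} · q^{b(m₂)} / ( ⟨1⊕α₂⟩_{m₂} · ∏_{i=1}^{m₂} (1 + α₁·q^{n−m₂+i−1}) ). -/

import Mathlib

open Finset

/-- q-integer `[k]_q = (1 - q^k)/(1 - q)`. -/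
noncomputable def qInt (q : ℝ) (k : ℤ) : ℝ := (1 - q ^ k) / (1 - q)

/-- q-factorial `[n]_q! = ∏_{i=1}^n [i]_q`. -/
noncomputable def qFact (q : ℝ) (n : ℕ) : ℝ := ∏ i ∈ Finset.Icc 1 n, qInt q (i : ℤ)

/-- q-binomial coefficient `C_q(n,k)`. -/
noncomputable def qBinom (q : ℝ) (n k : ℕ) : ℝ := qFact q n / (qFact q k * qFact q (n - k))

/-- q-falling factorial `[u]_{m,q} = ∏_{i=1}^m [u-i+1]_q`. -/
noncomputable def qFall (q : ℝ) (u : ℤ) (m : ℕ) : ℝ := ∏ i ∈ Finset.Icc 1 m, qInt q (u - (i : ℤ) + 1)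

/-- `[k]_{q⁻¹} = q^{1-k} · [k]_q`. -/
noncomputable def qIntInv (q : ℝ) (k : ℤ) : ℝ := q ^ (1 - k) * qInt q k

/-- `[u]_{m,q⁻¹} = ∏_{i=1}^m [u-i+1]_{q⁻¹}`. -/
noncomputable def qFallInv (q : ℝ) (u : ℤ) (m : ℕ) : ℝ := ∏ i ∈ Finset.Icc 1 m, qIntInv q (u - (i : ℤ) + 1)

/-- `b(k) = k(k-1)/2`. -/
def bb (k : ℕ) : ℕ := k * (k - 1) / 2

/-- `⟨1 ⊕ α⟩_m = ∏_{i=1}^m (1 + α q^{i-1})`. -/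
noncomputable def oplus (q α : ℝ) (m : ℕ) : ℝ := ∏ i ∈ Finset.Icc 1 m, (1 + α * q ^ (i - 1))

/-- `⟨1 ⊖ β⟩_m = ∏_{i=1}^m (1 - β q^{i-1})`. -/
noncomputable def ominus (q β : ℝ) (m : ℕ) : ℝ := ∏ i ∈ Finset.Icc 1 m, (1 - β * q ^ (i - 1))

/-- q-trinomial coefficient `T_q(n; x₁, x₂)`. -/
noncomputable def qTri (q : ℝ) (n x1 x2 : ℕ) : ℝ :=
  qFact q n / (qFact q x1 * qFact q x2 * qFact q (n - x1 - x2))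

/-- pmf of the q-trinomial distribution of the first kind. -/
noncomputable def fpmf (q a1 a2 : ℝ) (n y1 y2 : ℕ) : ℝ :=
  qTri q n y1 y2 * a1 ^ y1 * a2 ^ y2 * q ^ (bb y1 + bb y2) /
    (oplus q a1 n * oplus q a2 (n - y1))

section Helpers

lemma qInt_cast (q : ℝ) (k : ℕ) : qInt q (k : ℤ) = (1 - q ^ k) / (1 - q) := by
  simp [qInt, zpow_natCast]

lemma qInt_zero' (q : ℝ) : qInt q 0 = 0 := by simp [qInt]

lemma qInt_pos {q : ℝ} (hq0 : 0 < q) (hq1 : q < 1) {k : ℕ} (hk : 1 ≤ k) :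
    0 < qInt q (k : ℤ) := by
  rw [qInt_cast]
  have h1 : q ^ k < 1 := pow_lt_one₀ hq0.le hq1 (by omega)
  have h2 : (0:ℝ) < 1 - q := by linarith
  exact div_pos (by linarith) h2

lemma qFact_pos {q : ℝ} (hq0 : 0 < q) (hq1 : q < 1) (n : ℕ) : 0 < qFact q n := by
  refine Finset.prod_pos fun i hi => qInt_pos hq0 hq1 (mem_Icc.mp hi).1

lemma qFact_zero (q : ℝ) : qFact q 0 = 1 := by simp [qFact]

lemma qFact_succ (q : ℝ) (n : ℕ) : qFact q (n + 1) = qFact q n * qInt q ((n : ℤ) + 1) := by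
  rw [qFact, Finset.prod_Icc_succ_top (by omega)]
  push_cast
  rfl

lemma qBinom_zero (q : ℝ) (hq0 : 0 < q) (hq1 : q < 1) (n : ℕ) : qBinom q n 0 = 1 := by
  simp [qBinom, qFact_zero, div_self (qFact_pos hq0 hq1 n).ne']

lemma qBinom_self (q : ℝ) (hq0 : 0 < q) (hq1 : q < 1) (n : ℕ) : qBinom q n n = 1 := by
  simp [qBinom, qFact_zero, div_self (qFact_pos hq0 hq1 n).ne']

lemma qInt_split (q : ℝ) (a b : ℕ) :
    qInt q ((a + b : ℕ) : ℤ) = q ^ a * qInt q (b : ℤ) + qInt q (a : ℤ) := by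
  rw [qInt_cast, qInt_cast, qInt_cast, pow_add]
  by_cases h : (1:ℝ) - q = 0
  · simp [h]
  · field_simp
    ring

lemma pascal {q : ℝ} (hq0 : 0 < q) (hq1 : q < 1) (j a : ℕ) :
    qBinom q (j + a + 2) (j + 1)
      = q ^ (j + 1) * qBinom q (j + a + 1) (j + 1) + qBinom q (j + a + 1) j := by
  have h1 : j + a + 2 - (j + 1) = a + 1 := by omega
  have h2 : j + a + 1 - (j + 1) = a := by omega
  have h3 : j + a + 1 - j = a + 1 := by omega
  rw [qBinom, qBinom, qBinom, h1, h2, h3]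
  have e1 : qFact q (j + a + 2) = qFact q (j + a + 1) * qInt q ((j + a + 1 : ℕ) + 1) := qFact_succ q _
  have e2 : qFact q (a + 1) = qFact q a * qInt q ((a : ℤ) + 1) := qFact_succ q a
  have e3 : qFact q (j + 1) = qFact q j * qInt q ((j : ℤ) + 1) := qFact_succ q j
  have key : qInt q ((j + a + 1 : ℕ) + 1) = q ^ (j+1) * qInt q ((a:ℤ)+1) + qInt q ((j:ℤ)+1) := by
    have h := qInt_split q (j+1) (a+1)
    push_cast at h ⊢
    rw [show ((j:ℤ) + (a:ℤ) + 1 + 1) = ((j:ℤ) + 1 + ((a:ℤ) + 1)) from by ring]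
    exact h
  have f1 := (qFact_pos hq0 hq1 (j+a+1)).ne'
  have f2 := (qFact_pos hq0 hq1 a).ne'
  have f3 := (qFact_pos hq0 hq1 j).ne'
  have g2 := (qInt_pos hq0 hq1 (k := a+1) (by omega)).ne'
  have g3 := (qInt_pos hq0 hq1 (k := j+1) (by omega)).ne'
  push_cast at g2 g3
  rw [e1, e2, e3, key]
  field_simp

lemma bb_eq (k : ℕ) : bb k = ∑ i ∈ range k, i := (Finset.sum_range_id k).symm

lemma bb_succ (k : ℕ) : bb (k + 1) = bb k + k := by
  rw [bb_eq, bb_eq, Finset.sum_range_succ]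

lemma bb_add (m z : ℕ) : bb (m + z) = bb m + bb z + m * z := by
  rw [bb_eq, bb_eq, bb_eq, Finset.sum_range_add, Finset.sum_add_distrib]
  simp [Finset.sum_const, mul_comm]
  ring

lemma rothe {q : ℝ} (hq0 : 0 < q) (hq1 : q < 1) :
    ∀ (N : ℕ) (α : ℝ), ∑ k ∈ range (N + 1), qBinom q N k * α ^ k * q ^ (bb k)
      = ∏ i ∈ range N, (1 + α * q ^ i) := by
  intro N
  induction N with
  | zero => intro α; simp [bb, qBinom_zero q hq0 hq1]
  | succ N ih =>
    intro α
    have hR : ∏ i ∈ range (N + 1), (1 + α * q ^ i)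
        = (1 + α) * ∑ k ∈ range (N + 1), qBinom q N k * (α * q) ^ k * q ^ (bb k) := by
      rw [Finset.prod_range_succ', ih (α * q)]
      simp only [pow_zero, mul_one]
      rw [mul_comm (1 + α)]
      congr 1
      refine Finset.prod_congr rfl fun i _ => ?_
      rw [pow_succ']
      ring
    have key : ∑ k ∈ range N, qBinom q (N + 1) (k + 1) * α ^ (k + 1) * q ^ (bb (k + 1))
        = ∑ k ∈ range N, (qBinom q N (k + 1) * (α * q) ^ (k + 1) * q ^ (bb (k + 1))
            + α * (qBinom q N k * (α * q) ^ k * q ^ (bb k))) := by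
      refine Finset.sum_congr rfl fun k hk => ?_
      have hk' : k < N := mem_range.mp hk
      have hp := pascal hq0 hq1 k (N - 1 - k)
      have h2 : k + (N - 1 - k) + 2 = N + 1 := by omega
      have h1 : k + (N - 1 - k) + 1 = N := by omega
      rw [h2, h1] at hp
      rw [hp, bb_succ]
      ring
    set G : ℕ → ℝ := fun k => qBinom q N k * (α * q) ^ k * q ^ (bb k) with hG
    have hS1 : ∑ k ∈ range (N + 1), G k = (∑ k ∈ range N, G (k + 1)) + 1 := by
      rw [Finset.sum_range_succ']
      simp [hG, qBinom_zero q hq0 hq1, bb]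
    have hS2 : ∑ k ∈ range (N + 1), G k = (∑ k ∈ range N, G k) + (α * q) ^ N * q ^ (bb N) := by
      rw [Finset.sum_range_succ]
      simp [hG, qBinom_self q hq0 hq1]
    rw [hR]
    rw [Finset.sum_range_succ' _ (N + 1), Finset.sum_range_succ, key,
      Finset.sum_add_distrib, ← Finset.mul_sum]
    simp only [qBinom_zero q hq0 hq1, qBinom_self q hq0 hq1, pow_zero, mul_one, one_mul]
    have : (1 + α) * (∑ k ∈ range (N+1), G k)
        = ((∑ k ∈ range N, G (k + 1)) + 1)
            + α * ((∑ k ∈ range N, G k) + (α * q) ^ N * q ^ (bb N)) := by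
      rw [add_mul, one_mul]
      nth_rewrite 1 [hS1]
      rw [hS2]
    rw [this, bb_succ]
    simp only [hG]
    norm_num [show bb 0 = 0 from rfl]
    ring

lemma qFall_zero (q : ℝ) (u : ℤ) : qFall q u 0 = 1 := by simp [qFall]

lemma qFall_succ (q : ℝ) (u : ℤ) (m : ℕ) :
    qFall q u (m + 1) = qFall q u m * qInt q (u - m) := by
  rw [qFall, Finset.prod_Icc_succ_top (by omega)]
  rw [show (u - ((m : ℕ) + 1 : ℕ) + 1 : ℤ) = u - m by push_cast; ring]
  rfl

lemma qFall_eq_zero (q : ℝ) {y m : ℕ} (h : y < m) : qFall q (y : ℤ) m = 0 := by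
  refine Finset.prod_eq_zero (i := y + 1) (mem_Icc.mpr ⟨by omega, by omega⟩) ?_
  rw [show ((y : ℤ) - ((y + 1 : ℕ) : ℤ) + 1) = 0 by push_cast; ring]
  exact qInt_zero' q

lemma qFall_eq_div {q : ℝ} (hq0 : 0 < q) (hq1 : q < 1) {u m : ℕ} (h : m ≤ u) :
    qFall q (u : ℤ) m = qFact q u / qFact q (u - m) := by
  induction m with
  | zero => simp [qFall_zero, div_self (qFact_pos hq0 hq1 u).ne']
  | succ m ih =>
    have hm : m ≤ u := by omega
    rw [qFall_succ, ih hm]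
    have e : qFact q (u - m) = qFact q (u - (m + 1)) * qInt q ((u : ℤ) - m) := by
      have h1 : u - m = (u - (m + 1)) + 1 := by omega
      rw [h1, qFact_succ]
      congr 1
      push_cast [show ((u - (m+1) : ℕ) : ℤ) = (u : ℤ) - m - 1 by omega]
      ring
    have hx : qInt q ((u : ℤ) - m) ≠ 0 := by
      have : ((u - m : ℕ) : ℤ) = (u : ℤ) - m := by omega
      rw [← this]
      exact (qInt_pos hq0 hq1 (by omega)).ne'
    rw [e, div_mul_eq_mul_div, mul_div_mul_right _ _ hx]

lemma moment {q : ℝ} (hq0 : 0 < q) (hq1 : q < 1) (α : ℝ) (m N : ℕ) :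
    ∑ y ∈ range (N + 1), qFall q (y : ℤ) m * qBinom q N y * α ^ y * q ^ (bb y)
      = qFall q (N : ℤ) m * α ^ m * q ^ (bb m) * ∏ i ∈ range (N - m), (1 + α * q ^ (m + i)) := by
  by_cases h : m ≤ N
  · have hsplit : N + 1 = m + (N - m + 1) := by omega
    rw [hsplit, Finset.sum_range_add]
    have hz : ∀ y ∈ range m, qFall q (y:ℤ) m * qBinom q N y * α ^ y * q ^ (bb y) = 0 := by
      intro y hy
      rw [qFall_eq_zero q (mem_range.mp hy)]
      ring
    rw [Finset.sum_congr rfl hz, Finset.sum_const, smul_zero, zero_add]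
    have hterm : ∀ z ∈ range (N - m + 1),
        qFall q ((m + z : ℕ) : ℤ) m * qBinom q N (m + z) * α ^ (m + z) * q ^ (bb (m + z))
        = (qFall q (N : ℤ) m * α ^ m * q ^ (bb m))
            * (qBinom q (N - m) z * (α * q ^ m) ^ z * q ^ (bb z)) := by
      intro z hz'
      have hzN : z ≤ N - m := by have := mem_range.mp hz'; omega
      have key : qFall q ((m + z : ℕ) : ℤ) m * qBinom q N (m + z)
          = qFall q (N : ℤ) m * qBinom q (N - m) z := by
        rw [qFall_eq_div hq0 hq1 (by omega : m ≤ m + z), qFall_eq_div hq0 hq1 h]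
        rw [qBinom, qBinom]
        rw [show m + z - m = z by omega, show N - (m + z) = N - m - z by omega]
        have f1 := (qFact_pos hq0 hq1 z).ne'
        have f2 := (qFact_pos hq0 hq1 (m + z)).ne'
        have f3 := (qFact_pos hq0 hq1 (N - m)).ne'
        have f4 := (qFact_pos hq0 hq1 (N - m - z)).ne'
        field_simp
      calc qFall q ((m + z : ℕ) : ℤ) m * qBinom q N (m + z) * α ^ (m + z) * q ^ (bb (m + z))
          = (qFall q ((m + z : ℕ) : ℤ) m * qBinom q N (m + z))
              * (α ^ (m + z) * q ^ (bb (m + z))) := by ring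
        _ = (qFall q (N : ℤ) m * qBinom q (N - m) z)
              * (α ^ (m + z) * q ^ (bb (m + z))) := by rw [key]
        _ = _ := by rw [bb_add]; ring
    rw [Finset.sum_congr rfl hterm, ← Finset.mul_sum, rothe hq0 hq1 (N - m) (α * q ^ m)]
    congr 1
    refine Finset.prod_congr rfl fun i _ => ?_
    rw [pow_add]
    ring
  · have hz : ∀ y ∈ range (N + 1), qFall q (y:ℤ) m * qBinom q N y * α ^ y * q ^ (bb y) = 0 := by
      intro y hy
      rw [qFall_eq_zero q (by have := mem_range.mp hy; omega)]
      ring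
    rw [Finset.sum_congr rfl hz, Finset.sum_const, smul_zero,
      qFall_eq_zero q (by omega : N < m)]
    ring

lemma oplus_range (q α : ℝ) (m : ℕ) : oplus q α m = ∏ i ∈ range m, (1 + α * q ^ i) := by
  induction m with
  | zero => simp [oplus]
  | succ m ih =>
    rw [oplus, Finset.prod_Icc_succ_top (by omega), ← oplus, ih, Finset.prod_range_succ]
    norm_num

lemma oplus_pos {q α : ℝ} (hq0 : 0 < q) (hα : 0 < α) (m : ℕ) : 0 < oplus q α m := by
  refine Finset.prod_pos fun i _ => by positivity

lemma qInnerSum {q : ℝ} (hq0 : 0 < q) (hq1 : q < 1) {α : ℝ} (hα : 0 < α) (m N : ℕ) :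
    ∑ y ∈ range (N + 1),
      qFall q (y : ℤ) m * qBinom q N y * α ^ y * q ^ (bb y) / oplus q α N
      = qFall q (N : ℤ) m * α ^ m * q ^ (bb m) / oplus q α m := by
  rw [← Finset.sum_div, moment hq0 hq1]
  by_cases h : m ≤ N
  · have hsplit : oplus q α N
        = oplus q α m * ∏ i ∈ range (N - m), (1 + α * q ^ (m + i)) := by
      rw [oplus_range, oplus_range, show N = m + (N - m) by omega, Finset.prod_range_add]
      rw [show m + (N - m) - m = N - m by omega]
    have hP : (∏ i ∈ range (N - m), (1 + α * q ^ (m + i))) ≠ 0 := by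
      refine (Finset.prod_pos fun i _ => by positivity).ne'
    rw [hsplit, mul_div_mul_right _ _ hP]
  · rw [qFall_eq_zero q (by omega : N < m)]
    simp

lemma qOuterSum {q : ℝ} (hq0 : 0 < q) (hq1 : q < 1) (α : ℝ) {m n : ℕ} (hm : m ≤ n) :
    ∑ y ∈ range (n + 1), qFall q ((n - y : ℕ) : ℤ) m * qBinom q n y * α ^ y * q ^ (bb y)
      = qFall q (n : ℤ) m * ∏ i ∈ range (n - m), (1 + α * q ^ i) := by
  have hsplit : n + 1 = (n - m + 1) + m := by omega
  rw [hsplit, Finset.sum_range_add]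
  have hz : ∀ i ∈ range m,
      qFall q ((n - (n - m + 1 + i) : ℕ) : ℤ) m * qBinom q n (n - m + 1 + i)
        * α ^ (n - m + 1 + i) * q ^ (bb (n - m + 1 + i)) = 0 := by
    intro i hi
    rw [qFall_eq_zero q (by have := mem_range.mp hi; omega)]
    ring
  rw [Finset.sum_congr rfl hz, Finset.sum_const, smul_zero, add_zero]
  have hterm : ∀ y ∈ range (n - m + 1),
      qFall q ((n - y : ℕ) : ℤ) m * qBinom q n y * α ^ y * q ^ (bb y)
      = qFall q (n : ℤ) m * (qBinom q (n - m) y * α ^ y * q ^ (bb y)) := by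
    intro y hy
    have hyn : y ≤ n - m := by have := mem_range.mp hy; omega
    have key : qFall q ((n - y : ℕ) : ℤ) m * qBinom q n y
        = qFall q (n : ℤ) m * qBinom q (n - m) y := by
      rw [qFall_eq_div hq0 hq1 (by omega : m ≤ n - y), qFall_eq_div hq0 hq1 hm]
      rw [qBinom, qBinom]
      rw [show n - y - m = n - m - y by omega]
      have f1 := (qFact_pos hq0 hq1 y).ne'
      have f2 := (qFact_pos hq0 hq1 (n - y)).ne'
      have f3 := (qFact_pos hq0 hq1 (n - m)).ne'
      have f4 := (qFact_pos hq0 hq1 (n - m - y)).ne'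
      field_simp
    calc qFall q ((n - y : ℕ) : ℤ) m * qBinom q n y * α ^ y * q ^ (bb y)
        = (qFall q ((n - y : ℕ) : ℤ) m * qBinom q n y) * (α ^ y * q ^ (bb y)) := by ring
      _ = (qFall q (n : ℤ) m * qBinom q (n - m) y) * (α ^ y * q ^ (bb y)) := by rw [key]
      _ = _ := by ring
  rw [Finset.sum_congr rfl hterm, ← Finset.mul_sum, rothe hq0 hq1 (n - m) α]

lemma qTri_eq {q : ℝ} (hq0 : 0 < q) (hq1 : q < 1) (n x1 x2 : ℕ) :
    qTri q n x1 x2 = qBinom q n x1 * qBinom q (n - x1) x2 := by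
  rw [qTri, qBinom, qBinom, div_mul_div_comm]
  have f1 := (qFact_pos hq0 hq1 x1).ne'
  have f2 := (qFact_pos hq0 hq1 x2).ne'
  have f3 := (qFact_pos hq0 hq1 (n - x1)).ne'
  have f4 := (qFact_pos hq0 hq1 (n - x1 - x2)).ne'
  field_simp

lemma icc_shift (α q : ℝ) (c m : ℕ) :
    ∏ i ∈ Finset.Icc 1 m, (1 + α * q ^ (c + i - 1)) = ∏ i ∈ range m, (1 + α * q ^ (c + i)) := by
  induction m with
  | zero => simp
  | succ m ih =>
    rw [Finset.prod_Icc_succ_top (by omega), ih, Finset.prod_range_succ,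
      show c + (m + 1) - 1 = c + m by omega]

end Helpers

theorem stmt2 (q : ℝ) (hq0 : 0 < q) (hq1 : q < 1) (n : ℕ) (α1 α2 : ℝ)
    (hα1 : 0 < α1) (hα1' : α1 < 1) (hα2 : 0 < α2) (hα2' : α2 < 1)
    (m2 : ℕ) (hm2 : m2 ≤ n) :
    ∑ y1 ∈ Finset.range (n + 1), ∑ y2 ∈ Finset.range (n - y1 + 1),
      qFall q (y2 : ℤ) m2 * fpmf q α1 α2 n y1 y2
      = qFall q (n : ℤ) m2 * α2 ^ m2 * q ^ bb m2 /
        (oplus q α2 m2 * ∏ i ∈ Finset.Icc 1 m2, (1 + α1 * q ^ (n - m2 + i - 1))) := by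
  have hO1 := (oplus_pos hq0 hα1 n).ne'
  have hO2m := (oplus_pos hq0 hα2 m2).ne'
  have hin : ∀ y1 ∈ range (n + 1),
      (∑ y2 ∈ Finset.range (n - y1 + 1), qFall q (y2 : ℤ) m2 * fpmf q α1 α2 n y1 y2)
      = (α2 ^ m2 * q ^ bb m2 / (oplus q α2 m2 * oplus q α1 n))
          * (qFall q ((n - y1 : ℕ) : ℤ) m2 * qBinom q n y1 * α1 ^ y1 * q ^ (bb y1)) := by
    intro y1 _
    have hOy := (oplus_pos hq0 hα2 (n - y1)).ne'
    have step : ∀ y2 ∈ Finset.range (n - y1 + 1),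
        qFall q (y2 : ℤ) m2 * fpmf q α1 α2 n y1 y2
        = (qBinom q n y1 * α1 ^ y1 * q ^ (bb y1) / oplus q α1 n)
            * (qFall q (y2 : ℤ) m2 * qBinom q (n - y1) y2 * α2 ^ y2 * q ^ (bb y2)
                / oplus q α2 (n - y1)) := by
      intro y2 _
      rw [fpmf, qTri_eq hq0 hq1, pow_add]
      field_simp
    rw [Finset.sum_congr rfl step, ← Finset.mul_sum,
      qInnerSum hq0 hq1 hα2 m2 (n - y1)]
    field_simp
  rw [Finset.sum_congr rfl hin, ← Finset.mul_sum, qOuterSum hq0 hq1 α1 hm2]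
  have hadd := Finset.prod_range_add (fun i => 1 + α1 * q ^ i) (n - m2) m2
  rw [show (n - m2) + m2 = n by omega] at hadd
  have hsplit : oplus q α1 n = (∏ i ∈ range (n - m2), (1 + α1 * q ^ i))
      * ∏ i ∈ Finset.Icc 1 m2, (1 + α1 * q ^ (n - m2 + i - 1)) := by
    rw [icc_shift, oplus_range, hadd]
  have hP1 : (∏ i ∈ range (n - m2), (1 + α1 * q ^ i)) ≠ 0 :=
    (Finset.prod_pos fun i _ => by positivity).ne'
  have hP2 : (∏ i ∈ Finset.Icc 1 m2, (1 + α1 * q ^ (n - m2 + i - 1))) ≠ 0 :=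
    (Finset.prod_pos fun i _ => by positivity).ne'
  rw [hsplit]
  field_simp
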